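/- Let q = 2^n with n > 1, and let F_{q,1} = {j ∈ F_q : Tr_{F_q/F_2}(j) = 1}. Then for an indeterminate y over F_q, the identity ∏_{c ∈ F_q^×, j ∈ F_{q,1}} (c y^2 + y + j/c) = 1 + (y^q + y)^{q-1} holds in F_q[y]. -/

import Mathlib

open Polynomial

noncomputable instance {n : ℕ} : Fintype (GaloisField 2 n) := Fintype.ofFinite _
noncomputable instance {n : ℕ} : Fintype (GaloisField 2 n)ˣ := Fintype.ofFinite _
noncomputable instance {n : ℕ} :
    DecidablePred (fun j : GaloisField 2 n =>
      Algebra.trace (ZMod 2) (GaloisField 2 n) j = 1) :=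
  Classical.decPred _

open Finset
section GF

variable {K : Type*} [Field K] [Fintype K] [Fintype Kˣ] [DecidableEq K]

lemma prod_univ_X_sub_C' : ∏ a : K, (X - C a) = X ^ Fintype.card K - X := by
  classical
  have hm : (X ^ Fintype.card K - X : K[X]).Monic := by
    apply monic_X_pow_sub
    rw [degree_X]
    exact_mod_cast Fintype.one_lt_card
  have hd : (X ^ Fintype.card K - X : K[X]).natDegree = Fintype.card K :=
    FiniteField.X_pow_card_sub_X_natDegree_eq K Fintype.one_lt_card
  have hroots := FiniteField.roots_X_pow_card_sub_X K
  have h := prod_multiset_X_sub_C_of_monic_of_roots_card_eq hm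
    (by rw [hroots, hd]; simp)
  rw [hroots] at h
  rw [← h]
  rfl

lemma prod_units' {M : Type*} [CommMonoid M] (f : K → M) :
    ∏ c : Kˣ, f (c : K) = ∏ a ∈ univ.filter (fun a : K => a ≠ 0), f a := by
  classical
  refine (Fintype.prod_equiv (unitsEquivNeZero (G₀ := K)) (fun c => f (c : K)) (fun x => f (x : K))
    (fun c => rfl)).trans ?_
  exact (Finset.prod_subtype _ (by simp) f).symm

lemma prod_units_X_sub_C' : ∏ c : Kˣ, (X - C (c : K)) = X ^ (Fintype.card K - 1) - 1 := by
  classical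
  have hX : (X : K[X]) ≠ 0 := X_ne_zero
  apply mul_left_cancel₀ hX
  have h1 : (X : K[X]) * ∏ c : Kˣ, (X - C (c : K)) = ∏ a : K, (X - C a) := by
    rw [prod_units' (fun a => X - C a), Finset.filter_ne',
      ← Finset.mul_prod_erase univ _ (mem_univ (0 : K))]
    simp
  rw [h1, prod_univ_X_sub_C', mul_sub, mul_one, ← pow_succ',
    Nat.sub_add_cancel Fintype.card_pos]

section GF
variable {n : ℕ}

local notation "GK" => GaloisField 2 n
local notation "Tr" => Algebra.trace (ZMod 2) (GaloisField 2 n)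

noncomputable def frobAlg (n : ℕ) : GaloisField 2 n ≃ₐ[ZMod 2] GaloisField 2 n :=
  AlgEquiv.ofRingEquiv (f := frobeniusEquiv (GaloisField 2 n) 2) (fun r => by
    show (algebraMap (ZMod 2) (GaloisField 2 n) r) ^ 2 = algebraMap _ _ r
    rw [← map_pow]
    congr 1
    fin_cases r <;> rfl)

lemma trace_sq (a : GK) : Tr (a ^ 2) = Tr a := by
  have h := Algebra.trace_eq_of_algEquiv (frobAlg n) a
  have ha : frobAlg n a = a ^ 2 := rfl
  rw [ha] at h
  exact h

lemma trace_sq_add (a : GK) : Tr (a ^ 2 + a) = 0 := by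
  rw [map_add, trace_sq]
  exact CharTwo.add_self_eq_zero _

lemma exists_trace_one : ∃ j : GK, Tr j = 1 := by
  obtain ⟨j, hj⟩ := Algebra.trace_surjective (ZMod 2) GK 1
  exact ⟨j, hj⟩

lemma card_trace_one (hn : n ≠ 0) :
    (Finset.univ.filter fun j : GK => Tr j = 1).card = 2 ^ (n - 1) := by
  classical
  obtain ⟨j0, hj0⟩ := exists_trace_one (n := n)
  have hbij : (Finset.univ.filter fun j : GK => Tr j = 0).card
      = (Finset.univ.filter fun j : GK => Tr j = 1).card := by
    apply Finset.card_bij (fun a _ => a + j0)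
    · intro a ha
      simp only [Finset.mem_filter, Finset.mem_univ, true_and] at ha ⊢
      rw [map_add, ha, hj0, zero_add]
    · intro a _ b _ h
      exact add_right_cancel h
    · intro b hb
      simp only [Finset.mem_filter, Finset.mem_univ, true_and] at hb ⊢
      refine ⟨b + j0, ?_, ?_⟩
      · rw [map_add, hb, hj0, CharTwo.add_self_eq_zero]
      · rw [add_assoc, CharTwo.add_self_eq_zero, add_zero]
  have hsplit : (Finset.univ.filter fun j : GK => Tr j = 1).card
      + (Finset.univ.filter fun j : GK => Tr j = 0).card = 2 ^ n := by
    have h0 : (Finset.univ.filter fun j : GK => Tr j = 0)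
        = (Finset.univ.filter fun j : GK => ¬ Tr j = 1) := by
      apply Finset.filter_congr
      intro x _
      constructor
      · intro h; rw [h]; decide
      · intro h
        have hall : ∀ t : ZMod 2, ¬ t = 1 → t = 0 := by decide
        exact hall _ h
    rw [h0, Finset.card_filter_add_card_filter_not, Finset.card_univ, ← Nat.card_eq_fintype_card,
      GaloisField.card 2 n hn]
  have h2 : 2 ^ n = 2 ^ (n - 1) * 2 := by
    rw [← pow_succ]
    congr 1
    omega
  omega


lemma card_trace_zero (hn : n ≠ 0) :
    (Finset.univ.filter fun j : GK => Tr j = 0).card = 2 ^ (n - 1) := by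
  classical
  have h0 : (Finset.univ.filter fun j : GK => Tr j = 0)
      = (Finset.univ.filter fun j : GK => ¬ Tr j = 1) := by
    apply Finset.filter_congr
    intro x _
    constructor
    · intro h; rw [h]; decide
    · intro h
      have hall : ∀ t : ZMod 2, ¬ t = 1 → t = 0 := by decide
      exact hall _ h
  have hsum := Finset.card_filter_add_card_filter_not
    (s := (Finset.univ : Finset GK)) (p := fun j : GK => Tr j = 1)
  rw [Finset.card_univ, ← Nat.card_eq_fintype_card, GaloisField.card 2 n hn,
    card_trace_one hn] at hsum
  have h2 : 2 ^ n = 2 ^ (n - 1) * 2 := by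
    rw [← pow_succ]
    congr 1
    omega
  rw [h0]
  omega

lemma prod_trace_zero (hn : n ≠ 0) :
    ∏ j ∈ Finset.univ.filter (fun j : GK => Tr j = 0), ((X : GK[X]) ^ 2 + X + C j)
      = X ^ (2 ^ n) + X := by
  classical
  haveI : CharP (GK[X]) 2 := charP_of_injective_algebraMap' GK 2
  have hcard : Fintype.card GK = 2 ^ n := by
    rw [← Nat.card_eq_fintype_card]; exact GaloisField.card 2 n hn
  have h1lt : 1 < 2 ^ n := Nat.one_lt_two_pow hn
  have hmf : ∀ j : GK, ((X : GK[X]) ^ 2 + X + C j).Monic := fun j => by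
    have h : (X : GK[X]) ^ 2 + X + C j = X ^ 2 + (X + C j) := by ring
    rw [h]
    exact monic_X_pow_add (by rw [degree_X_add_C]; exact_mod_cast one_lt_two)
  have hdeg : ∀ j : GK, ((X : GK[X]) ^ 2 + X + C j).natDegree = 2 := fun j => by
    have h : (X : GK[X]) ^ 2 + X + C j = X ^ 2 + (X + C j) := by ring
    rw [h]
    have hd : degree ((X : GK[X]) ^ 2 + (X + C j)) = 2 := by
      rw [degree_add_eq_left_of_degree_lt (by
          rw [degree_X_add_C, degree_X_pow]; exact_mod_cast one_lt_two), degree_X_pow]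
      norm_cast
    exact natDegree_eq_of_degree_eq_some hd
  set P := ∏ j ∈ Finset.univ.filter (fun j : GK => Tr j = 0), ((X : GK[X]) ^ 2 + X + C j)
    with hP
  have hPm : P.Monic := monic_prod_of_monic _ _ (fun j _ => hmf j)
  have hPdeg : P.natDegree = 2 ^ n := by
    rw [hP, natDegree_prod _ _ (fun j _ => (hmf j).ne_zero),
      Finset.sum_congr rfl (fun j _ => hdeg j), Finset.sum_const,
      card_trace_zero hn, smul_eq_mul, ← pow_succ]
    congr 1
    omega
  have hQm : ((X : GK[X]) ^ (2 ^ n) - X).Monic :=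
    monic_X_pow_sub (by rw [degree_X]; exact_mod_cast h1lt)
  have hQdeg : ((X : GK[X]) ^ (2 ^ n) - X).natDegree = 2 ^ n :=
    FiniteField.X_pow_card_sub_X_natDegree_eq _ h1lt
  have hPeval : ∀ a : GK, eval a P = 0 := fun a => by
    rw [hP, eval_prod]
    apply Finset.prod_eq_zero (i := a ^ 2 + a)
    · simp [trace_sq_add]
    · simp [CharTwo.add_self_eq_zero]
  have hQeval : ∀ a : GK, eval a ((X : GK[X]) ^ (2 ^ n) - X) = 0 := fun a => by
    rw [eval_sub, eval_pow, eval_X, ← hcard, FiniteField.pow_card, sub_self]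
  have h0 : P - ((X : GK[X]) ^ (2 ^ n) - X) = 0 := by
    by_contra h
    have hdlt : (P - ((X : GK[X]) ^ (2 ^ n) - X)).natDegree < 2 ^ n := by
      have hdd : degree (P - ((X : GK[X]) ^ (2 ^ n) - X)) < degree P := by
        apply degree_sub_lt
        · rw [degree_eq_natDegree hPm.ne_zero, degree_eq_natDegree hQm.ne_zero,
            hPdeg, hQdeg]
        · exact hPm.ne_zero
        · rw [hPm.leadingCoeff, hQm.leadingCoeff]
      rw [degree_eq_natDegree hPm.ne_zero, hPdeg] at hdd
      exact_mod_cast (natDegree_lt_iff_degree_lt h).mpr hdd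
    apply h
    apply eq_zero_of_natDegree_lt_card_of_eval_eq_zero _ Function.injective_id
    · intro a
      simp only [id, eval_sub, hPeval, hQeval, sub_self]
    · rw [hcard]
      exact hdlt
  have := sub_eq_zero.mp h0
  rw [this, CharTwo.sub_eq_add]


lemma prod_univ_quad (hn : n ≠ 0) :
    ∏ j : GK, ((X : GK[X]) ^ 2 + X + C j)
      = (X ^ (2 ^ n) + X) * (X ^ (2 ^ n) + X + 1) := by
  classical
  haveI : CharP (GK[X]) 2 := charP_of_injective_algebraMap' GK 2
  have hcard : Fintype.card GK = 2 ^ n := by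
    rw [← Nat.card_eq_fintype_card]; exact GaloisField.card 2 n hn
  have hbase := prod_univ_X_sub_C' (K := GK)
  rw [hcard] at hbase
  have h := congrArg (aeval ((X : GK[X]) ^ 2 + X)) hbase
  rw [map_prod, map_sub, map_pow, aeval_X] at h
  have hL : ∀ j : GK, aeval ((X : GK[X]) ^ 2 + X) ((X : GK[X]) - C j)
      = (X : GK[X]) ^ 2 + X + C j := fun j => by
    rw [map_sub, aeval_X, aeval_C]
    show (X : GK[X]) ^ 2 + X - C j = _
    rw [CharTwo.sub_eq_add]
  rw [Finset.prod_congr rfl (fun j _ => hL j)] at h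
  rw [h]
  have hfr : ((X : GK[X]) ^ 2 + X) ^ 2 ^ n = (X ^ (2 ^ n)) ^ 2 + X ^ (2 ^ n) := by
    rw [add_pow_char_pow, ← pow_mul, ← pow_mul, mul_comm 2 (2 ^ n)]
  rw [CharTwo.sub_eq_add, hfr]
  have h2 : (2 : GK[X]) = 0 := CharTwo.two_eq_zero
  have hring : ((X : GK[X]) ^ (2 ^ n) + X) * (X ^ (2 ^ n) + X + 1)
      = (X ^ (2 ^ n)) ^ 2 + X ^ (2 ^ n) + (X ^ 2 + X)
        + 2 * (X ^ (2 ^ n) * X) := by ring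
  rw [hring, h2, zero_mul, add_zero]


lemma X_pow_add_X_ne_zero (hn : n ≠ 0) : ((X : GK[X]) ^ (2 ^ n) + X) ≠ 0 := by
  haveI : CharP (GK[X]) 2 := charP_of_injective_algebraMap' GK 2
  rw [← CharTwo.sub_eq_add]
  exact FiniteField.X_pow_card_sub_X_ne_zero _ (Nat.one_lt_two_pow hn)

lemma prod_trace_one (hn : n ≠ 0) :
    ∏ j ∈ Finset.univ.filter (fun j : GK => Tr j = 1), ((X : GK[X]) ^ 2 + X + C j)
      = X ^ (2 ^ n) + X + 1 := by
  classical
  apply mul_left_cancel₀ (X_pow_add_X_ne_zero hn)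
  have hsplit : (∏ j ∈ Finset.univ.filter (fun j : GK => Tr j = 0),
        ((X : GK[X]) ^ 2 + X + C j))
      * (∏ j ∈ Finset.univ.filter (fun j : GK => Tr j = 1),
        ((X : GK[X]) ^ 2 + X + C j))
      = ∏ j : GK, ((X : GK[X]) ^ 2 + X + C j) := by
    rw [show (Finset.univ.filter fun j : GK => Tr j = 1)
        = (Finset.univ.filter fun j : GK => ¬ Tr j = 0) from
      Finset.filter_congr (fun x _ => by
        constructor
        · intro h; rw [h]; decide
        · intro h
          have hall : ∀ t : ZMod 2, ¬ t = 0 → t = 1 := by decide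
          exact hall _ h)]
    exact Finset.prod_filter_mul_prod_filter_not _ _ _
  calc (X ^ (2 ^ n) + X) * ∏ j ∈ Finset.univ.filter (fun j : GK => Tr j = 1),
        ((X : GK[X]) ^ 2 + X + C j)
      = (∏ j ∈ Finset.univ.filter (fun j : GK => Tr j = 0),
          ((X : GK[X]) ^ 2 + X + C j))
        * ∏ j ∈ Finset.univ.filter (fun j : GK => Tr j = 1),
          ((X : GK[X]) ^ 2 + X + C j) := by rw [prod_trace_zero hn]
    _ = ∏ j : GK, ((X : GK[X]) ^ 2 + X + C j) := hsplit
    _ = (X ^ (2 ^ n) + X) * (X ^ (2 ^ n) + X + 1) := prod_univ_quad hn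

lemma prod_units_CX (hn : n ≠ 0) :
    ∏ c : GKˣ, (C ((c : GK)) * X + 1) = (X : GK[X]) ^ (2 ^ n - 1) + 1 := by
  classical
  haveI : CharP (GK[X]) 2 := charP_of_injective_algebraMap' GK 2
  have hcard : Fintype.card GK = 2 ^ n := by
    rw [← Nat.card_eq_fintype_card]; exact GaloisField.card 2 n hn
  have h1 : ∀ c : GKˣ, C ((c : GK)) * X + 1
      = C ((c : GK)) * (X + C (((c⁻¹ : GKˣ) : GK))) := fun c => by
    rw [mul_add, ← C_mul]
    norm_cast
    rw [mul_inv_cancel]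
    simp
  rw [Finset.prod_congr rfl (fun c _ => h1 c), Finset.prod_mul_distrib]
  have h2 : (∏ c : GKˣ, C ((c : GK)) : GK[X]) = 1 := by
    rw [← map_prod]
    have hv : (∏ c : GKˣ, (c : GK)) = ((∏ c : GKˣ, c : GKˣ) : GK) :=
      (map_prod (Units.coeHom GK) _ _).symm
    rw [hv, FiniteField.prod_univ_units_id_eq_neg_one, Units.val_neg, Units.val_one,
      CharTwo.neg_eq, map_one]
  rw [h2, one_mul]
  have h3 : ∏ c : GKˣ, ((X : GK[X]) + C (((c⁻¹ : GKˣ) : GK)))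
      = ∏ c : GKˣ, ((X : GK[X]) + C ((c : GK))) :=
    Fintype.prod_equiv (Equiv.inv GKˣ) _ _ (fun c => rfl)
  rw [h3, Finset.prod_congr rfl
    (fun (c : GKˣ) _ => (CharTwo.sub_eq_add (X : GK[X]) (C ((c : GK)))).symm),
    prod_units_X_sub_C', hcard, CharTwo.sub_eq_add]


lemma inner_prod (hn : n ≠ 0) (c : GKˣ) :
    ∏ j ∈ Finset.univ.filter (fun j : GK => Tr j = 1),
      (C ((c : GK)) * X ^ 2 + X + C (j / (c : GK)))
    = (C (((c : GK))⁻¹)) ^ (Finset.univ.filter (fun j : GK => Tr j = 1)).card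
      * (C ((c : GK)) * ((X : GK[X]) ^ (2 ^ n) + X) + 1) := by
  classical
  have hcard : Fintype.card GK = 2 ^ n := by
    rw [← Nat.card_eq_fintype_card]; exact GaloisField.card 2 n hn
  have hc : (c : GK) ≠ 0 := c.ne_zero
  have hfac : ∀ j : GK,
      C ((c : GK)) * X ^ 2 + X + C (j / (c : GK))
      = C (((c : GK))⁻¹) * aeval (C ((c : GK)) * X) ((X : GK[X]) ^ 2 + X + C j) := fun j => by
    rw [map_add, map_add, map_pow, aeval_X, aeval_C]
    have key : C (((c : GK))⁻¹) * ((C ((c : GK)) * X) ^ 2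
          + C ((c : GK)) * X + C j)
        = C (((c : GK))⁻¹ * (c : GK) ^ 2) * X ^ 2
          + C (((c : GK))⁻¹ * (c : GK)) * X
          + C (((c : GK))⁻¹ * j) := by
      rw [C_mul, C_mul, C_mul, C_pow]; ring
    show _ = C (((c : GK))⁻¹) * ((C ((c : GK)) * X) ^ 2 + C ((c : GK)) * X + C j)
    have e1 : ((c : GK))⁻¹ * (c : GK) ^ 2 = (c : GK) := by
      rw [sq, inv_mul_cancel_left₀ hc]
    rw [key, e1, inv_mul_cancel₀ hc, C_1, one_mul, div_eq_inv_mul]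
  rw [Finset.prod_congr rfl (fun j _ => hfac j), Finset.prod_mul_distrib,
    Finset.prod_const, ← map_prod, prod_trace_one hn]
  congr 1
  rw [map_add, map_add, map_pow, aeval_X, map_one, mul_pow, ← C_pow, ← hcard,
    FiniteField.pow_card, hcard, mul_add]

/-- Let `q = 2^n` with `n > 1`.  For an indeterminate `y` over `F_q`,
`∏_{c ∈ F_q^×, j ∈ F_(q,1)} (c y² + y + j/c) = 1 + (y^q + y)^(q-1)` in `F_q[y]`,
where `F_(q,1)` is the set of elements of `F_q` of absolute trace 1. -/
theorem product_identity (n : ℕ) (hn : 1 < n) (q : ℕ) (hq : q = 2 ^ n) :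
    ∏ c : (GaloisField 2 n)ˣ,
      ∏ j ∈ Finset.univ.filter (fun j : GaloisField 2 n =>
          Algebra.trace (ZMod 2) (GaloisField 2 n) j = 1),
        (Polynomial.C ((c : GaloisField 2 n)) * X ^ 2 + X
          + Polynomial.C (j / (c : GaloisField 2 n)))
      = 1 + ((X : (GaloisField 2 n)[X]) ^ q + X) ^ (q - 1) := by
  classical
  have hn0 : n ≠ 0 := by omega
  haveI : CharP ((GaloisField 2 n)[X]) 2 :=
    charP_of_injective_algebraMap' (GaloisField 2 n) 2
  subst hq
  rw [Finset.prod_congr rfl (fun c _ => inner_prod hn0 c), Finset.prod_mul_distrib,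
    Finset.prod_pow]
  have h1 : (∏ c : (GaloisField 2 n)ˣ, C (((c : GaloisField 2 n))⁻¹)) = 1 := by
    rw [← map_prod]
    have hi : (∏ c : (GaloisField 2 n)ˣ, ((c : GaloisField 2 n))⁻¹)
        = ∏ c : (GaloisField 2 n)ˣ, ((c⁻¹ : (GaloisField 2 n)ˣ) : GaloisField 2 n) := by
      apply Finset.prod_congr rfl
      intro c _
      exact (Units.val_inv_eq_inv_val c).symm
    rw [hi,
      Fintype.prod_equiv (Equiv.inv (GaloisField 2 n)ˣ)
        (fun c : (GaloisField 2 n)ˣ => ((c⁻¹ : (GaloisField 2 n)ˣ) : GaloisField 2 n))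
        (fun c : (GaloisField 2 n)ˣ => ((c : (GaloisField 2 n)ˣ) : GaloisField 2 n))
        (fun c => rfl)]
    have hv : (∏ c : (GaloisField 2 n)ˣ, (c : GaloisField 2 n))
        = (((∏ c : (GaloisField 2 n)ˣ, c : (GaloisField 2 n)ˣ)) : GaloisField 2 n) :=
      (map_prod (Units.coeHom (GaloisField 2 n)) _ _).symm
    rw [hv, FiniteField.prod_univ_units_id_eq_neg_one, Units.val_neg, Units.val_one,
      CharTwo.neg_eq, map_one]
  rw [h1, one_pow, one_mul]
  have hsub : ∀ c : (GaloisField 2 n)ˣ,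
      C ((c : GaloisField 2 n)) * ((X : (GaloisField 2 n)[X]) ^ (2 ^ n) + X) + 1
      = aeval ((X : (GaloisField 2 n)[X]) ^ (2 ^ n) + X)
          (C ((c : GaloisField 2 n)) * X + 1) := fun c => by
    rw [map_add, map_mul, aeval_X, aeval_C, map_one]
    rfl
  rw [Finset.prod_congr rfl (fun c _ => hsub c), ← map_prod, prod_units_CX hn0,
    map_add, map_pow, aeval_X, map_one, add_comm]

end GF

end GF
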